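/- The Subgraph MCS Model is an MCS Model. Precisely: let G be the set of finite labeled graphs with vertex labels in Σ_V and edge labels in Σ_E, with isomorphic graphs identified, let ⊆ be the subgraph-isomorphism relation, and let α : Σ_V ∪ Σ_E → (0,∞) be a label weighting function; define s_{GVEα}(g) = 0 if g is empty and s_{GVEα}(g) = Σ_{v∈V} α(ℓ_V(v)) + Σ_{e∈E} α(ℓ_E(e)) otherwise. Then ⊆ is a partial order on G, s_{GVEα} satisfies (S1) and (S2), any two graphs have a nonempty finite set of common subelements (so (A1) holds), and (A2) holds: if g₁ ⊆ h and g₂ ⊆ h then there exists g₁₂ ⊆ g₁, g₂ with s_{GVEα}(h) ≥ s_{GVEα}(g₁) + s_{GVEα}(g₂) − s_{GVEα}(g₁₂). -/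

import Mathlib

/-- A finite labeled graph with vertex labels in `LV` and edge labels in `LE`.
Vertices are drawn from `ℕ`; label functions are total on `ℕ` resp. `Sym2 ℕ`
(only the values on actual vertices and edges are relevant). -/
structure LGraph (LV LE : Type) where
  verts : Finset ℕ
  edges : Finset (Sym2 ℕ)
  edges_sub : ∀ e ∈ edges, ∀ v ∈ e, v ∈ verts
  edges_nodiag : ∀ e ∈ edges, ¬ e.IsDiag
  ℓV : ℕ → LV
  ℓE : Sym2 ℕ → LE

/-- Label-preserving isomorphism of labeled graphs. -/
def LGraph.Iso {LV LE : Type} (g₁ g₂ : LGraph LV LE) : Prop :=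
  ∃ φ : ℕ → ℕ,
    Set.BijOn φ ↑g₁.verts ↑g₂.verts ∧
    (∀ u ∈ g₁.verts, ∀ v ∈ g₁.verts, (s(u, v) ∈ g₁.edges ↔ s(φ u, φ v) ∈ g₂.edges)) ∧
    (∀ v ∈ g₁.verts, g₂.ℓV (φ v) = g₁.ℓV v) ∧
    (∀ u ∈ g₁.verts, ∀ v ∈ g₁.verts, s(u, v) ∈ g₁.edges →
      g₂.ℓE s(φ u, φ v) = g₁.ℓE s(u, v))

/-- `g'` is a subgraph of `g`: `V' ⊆ V`, `E' ⊆ E ∩ [V']²` (the containment in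
`[V']²` being guaranteed by the structure invariant), with agreeing labels. -/
def LGraph.IsSubgraph {LV LE : Type} (g' g : LGraph LV LE) : Prop :=
  g'.verts ⊆ g.verts ∧ g'.edges ⊆ g.edges ∧
  (∀ v ∈ g'.verts, g'.ℓV v = g.ℓV v) ∧
  (∀ e ∈ g'.edges, g'.ℓE e = g.ℓE e)

/-- `g ⊆ h` (subgraph isomorphism): some subgraph of `h` is isomorphic to `g`. -/
def LGraph.SubIso {LV LE : Type} (g h : LGraph LV LE) : Prop :=
  ∃ g'' : LGraph LV LE, LGraph.IsSubgraph g'' h ∧ LGraph.Iso g'' g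

/-- Weighted size `s_{GVEα}` of a labeled graph (it vanishes on the empty
graph, since both sums are then empty). -/
def LGraph.sizeVE {LV LE : Type} (αV : LV → ℝ) (αE : LE → ℝ)
    (g : LGraph LV LE) : ℝ :=
  ∑ v ∈ g.verts, αV (g.ℓV v) + ∑ e ∈ g.edges, αE (g.ℓE e)

namespace LGraph
variable {LV LE : Type}

theorem iso_refl (g : LGraph LV LE) : g.Iso g :=
  ⟨id, Set.bijOn_id _, fun _ _ _ _ => Iff.rfl, fun _ _ => rfl, fun _ _ _ _ _ => rfl⟩

theorem iso_symm {g₁ g₂ : LGraph LV LE} (h : g₁.Iso g₂) : g₂.Iso g₁ := by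
  obtain ⟨φ, hbij, hedge, hlv, hle⟩ := h
  set ψ := Function.invFunOn φ (g₁.verts : Set ℕ) with hψdef
  have hmem : ∀ v ∈ g₂.verts, ψ v ∈ g₁.verts := fun v hv =>
    hbij.surjOn.mapsTo_invFunOn hv
  have hφψ : ∀ v ∈ g₂.verts, φ (ψ v) = v := fun v hv => hbij.invOn_invFunOn.2 hv
  refine ⟨ψ, hbij.invOn_invFunOn.symm.bijOn hbij.surjOn.mapsTo_invFunOn hbij.mapsTo,
    ?_, ?_, ?_⟩
  · intro u hu v hv
    have := hedge _ (hmem u hu) _ (hmem v hv)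
    rw [hφψ u hu, hφψ v hv] at this
    exact this.symm
  · intro v hv
    have := hlv _ (hmem v hv)
    rw [hφψ v hv] at this
    exact this.symm
  · intro u hu v hv he
    have hin : s(ψ u, ψ v) ∈ g₁.edges := by
      have := hedge _ (hmem u hu) _ (hmem v hv)
      rw [hφψ u hu, hφψ v hv] at this
      exact this.mpr he
    have := hle _ (hmem u hu) _ (hmem v hv) hin
    rw [hφψ u hu, hφψ v hv] at this
    exact this.symm

theorem iso_trans {g₁ g₂ g₃ : LGraph LV LE} (h : g₁.Iso g₂) (h' : g₂.Iso g₃) :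
    g₁.Iso g₃ := by
  obtain ⟨φ, hbij, hedge, hlv, hle⟩ := h
  obtain ⟨φ', hbij', hedge', hlv', hle'⟩ := h'
  have hm : ∀ v ∈ g₁.verts, φ v ∈ g₂.verts := fun v hv => hbij.mapsTo hv
  refine ⟨φ' ∘ φ, hbij'.comp hbij, ?_, ?_, ?_⟩
  · intro u hu v hv
    exact (hedge u hu v hv).trans (hedge' _ (hm u hu) _ (hm v hv))
  · intro v hv
    exact (hlv' _ (hm v hv)).trans (hlv v hv)
  · intro u hu v hv he
    exact (hle' _ (hm u hu) _ (hm v hv) ((hedge u hu v hv).mp he)).trans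
      (hle u hu v hv he)

theorem isSubgraph_refl (g : LGraph LV LE) : g.IsSubgraph g :=
  ⟨subset_rfl, subset_rfl, fun _ _ => rfl, fun _ _ => rfl⟩

theorem isSubgraph_trans {x y z : LGraph LV LE} (h : x.IsSubgraph y)
    (h' : y.IsSubgraph z) : x.IsSubgraph z :=
  ⟨h.1.trans h'.1, h.2.1.trans h'.2.1,
    fun v hv => (h.2.2.1 v hv).trans (h'.2.2.1 v (h.1 hv)),
    fun e he => (h.2.2.2 e he).trans (h'.2.2.2 e (h.2.1 he))⟩

theorem subIso_of_isSubgraph {x y : LGraph LV LE} (h : x.IsSubgraph y) :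
    x.SubIso y := ⟨x, h, iso_refl x⟩

theorem sym2_rep (z : Sym2 ℕ) : ∃ a b, z = s(a, b) :=
  z.inductionOn fun a b => ⟨a, b, rfl⟩

theorem size_eq_of_iso (αV : LV → ℝ) (αE : LE → ℝ) {g₁ g₂ : LGraph LV LE}
    (h : g₁.Iso g₂) : g₁.sizeVE αV αE = g₂.sizeVE αV αE := by
  obtain ⟨φ, hbij, hedge, hlv, hle⟩ := h
  have hm : ∀ v ∈ g₁.verts, φ v ∈ g₂.verts := fun v hv => hbij.mapsTo hv
  unfold LGraph.sizeVE
  congr 1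
  · refine Finset.sum_bij (fun a _ => φ a) (fun a ha => hm a ha) ?_ ?_ ?_
    · intro a ha b hb hab
      exact hbij.injOn (Finset.mem_coe.mpr ha) (Finset.mem_coe.mpr hb) hab
    · intro b hb
      obtain ⟨a, ha, rfl⟩ := hbij.surjOn (Finset.mem_coe.mpr hb)
      exact ⟨a, ha, rfl⟩
    · intro a ha
      rw [hlv a ha]
  · refine Finset.sum_bij (fun e _ => Sym2.map φ e) ?_ ?_ ?_ ?_
    · intro e he
      obtain ⟨a, b, rfl⟩ := sym2_rep e
      have ha : a ∈ g₁.verts := g₁.edges_sub _ he a (by simp)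
      have hb : b ∈ g₁.verts := g₁.edges_sub _ he b (by simp)
      simpa using (hedge a ha b hb).mp he
    · intro e he e' he' hee
      obtain ⟨a, b, rfl⟩ := sym2_rep e
      obtain ⟨c, d, rfl⟩ := sym2_rep e'
      have ha : a ∈ g₁.verts := g₁.edges_sub _ he a (by simp)
      have hb : b ∈ g₁.verts := g₁.edges_sub _ he b (by simp)
      have hc : c ∈ g₁.verts := g₁.edges_sub _ he' c (by simp)
      have hd : d ∈ g₁.verts := g₁.edges_sub _ he' d (by simp)
      simp only [Sym2.map_pair_eq, Sym2.eq_iff] at hee ⊢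
      rcases hee with ⟨h1, h2⟩ | ⟨h1, h2⟩
      · exact Or.inl ⟨hbij.injOn ha hc h1, hbij.injOn hb hd h2⟩
      · exact Or.inr ⟨hbij.injOn ha hd h1, hbij.injOn hb hc h2⟩
    · intro e' he'
      obtain ⟨c, d, rfl⟩ := sym2_rep e'
      have hc : c ∈ g₂.verts := g₂.edges_sub _ he' c (by simp)
      have hd : d ∈ g₂.verts := g₂.edges_sub _ he' d (by simp)
      obtain ⟨a, ha, rfl⟩ := hbij.surjOn (Finset.mem_coe.mpr hc)
      obtain ⟨b, hb, rfl⟩ := hbij.surjOn (Finset.mem_coe.mpr hd)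
      exact ⟨s(a, b), (hedge a ha b hb).mpr he', by simp⟩
    · intro e he
      obtain ⟨a, b, rfl⟩ := sym2_rep e
      have ha : a ∈ g₁.verts := g₁.edges_sub _ he a (by simp)
      have hb : b ∈ g₁.verts := g₁.edges_sub _ he b (by simp)
      have := hle a ha b hb he
      simp only [Sym2.map_pair_eq]
      rw [this]

theorem size_sub_eq {αV : LV → ℝ} {αE : LE → ℝ} {x y : LGraph LV LE}
    (h : x.IsSubgraph y) :
    x.sizeVE αV αE =
      ∑ v ∈ x.verts, αV (y.ℓV v) + ∑ e ∈ x.edges, αE (y.ℓE e) := by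
  unfold LGraph.sizeVE
  congr 1
  · exact Finset.sum_congr rfl fun v hv => by rw [h.2.2.1 v hv]
  · exact Finset.sum_congr rfl fun e he => by rw [h.2.2.2 e he]

theorem size_le_of_isSubgraph {αV : LV → ℝ} {αE : LE → ℝ}
    (hαV : ∀ a, 0 < αV a) (hαE : ∀ b, 0 < αE b) {x y : LGraph LV LE}
    (h : x.IsSubgraph y) : x.sizeVE αV αE ≤ y.sizeVE αV αE := by
  rw [size_sub_eq h]
  unfold LGraph.sizeVE
  exact add_le_add
    (Finset.sum_le_sum_of_subset_of_nonneg h.1 fun i _ _ => (hαV _).le)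
    (Finset.sum_le_sum_of_subset_of_nonneg h.2.1 fun i _ _ => (hαE _).le)

theorem subset_eq_of_sum_eq {α : Type*} [DecidableEq α] {s t : Finset α}
    {f : α → ℝ} (hsub : s ⊆ t) (hpos : ∀ i ∈ t, 0 < f i)
    (heq : ∑ i ∈ s, f i = ∑ i ∈ t, f i) : s = t := by
  by_contra hne
  obtain ⟨i, hit, his⟩ := Finset.exists_of_ssubset (hsub.ssubset_of_ne hne)
  exact absurd heq (ne_of_lt (Finset.sum_lt_sum_of_subset hsub hit his
    (hpos i hit) fun j hj _ => (hpos j hj).le))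

theorem iso_of_isSubgraph_size_eq {αV : LV → ℝ} {αE : LE → ℝ}
    (hαV : ∀ a, 0 < αV a) (hαE : ∀ b, 0 < αE b) {x y : LGraph LV LE}
    (h : x.IsSubgraph y) (heq : x.sizeVE αV αE = y.sizeVE αV αE) : x.Iso y := by
  have hv : ∑ v ∈ x.verts, αV (y.ℓV v) ≤ ∑ v ∈ y.verts, αV (y.ℓV v) :=
    Finset.sum_le_sum_of_subset_of_nonneg h.1 fun i _ _ => (hαV _).le
  have he : ∑ e ∈ x.edges, αE (y.ℓE e) ≤ ∑ e ∈ y.edges, αE (y.ℓE e) :=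
    Finset.sum_le_sum_of_subset_of_nonneg h.2.1 fun i _ _ => (hαE _).le
  rw [size_sub_eq h] at heq
  unfold LGraph.sizeVE at heq
  have hveq : x.verts = y.verts :=
    subset_eq_of_sum_eq h.1 (fun i _ => hαV _) (by linarith)
  have heeq : x.edges = y.edges :=
    subset_eq_of_sum_eq h.2.1 (fun i _ => hαE _) (by linarith)
  refine ⟨id, by rw [hveq]; exact Set.bijOn_id _, ?_, ?_, ?_⟩
  · intro u _ v _
    simp [heeq]
  · intro v hv
    exact (h.2.2.1 v hv).symm
  · intro u hu v hv hev
    exact (h.2.2.2 _ hev).symm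

theorem subIso_of_isSubgraph_of_iso {x y z : LGraph LV LE}
    (hxy : x.IsSubgraph y) (h : y.Iso z) : x.SubIso z := by
  obtain ⟨φ, hbij, hedge, hlv, hle⟩ := h
  have hmx : ∀ v ∈ x.verts, v ∈ y.verts := fun v hv => hxy.1 hv
  have hm : ∀ v ∈ y.verts, φ v ∈ z.verts := fun v hv => hbij.mapsTo hv
  classical
  refine ⟨⟨x.verts.image φ, x.edges.image (Sym2.map φ), ?_, ?_, z.ℓV, z.ℓE⟩,
    ⟨?_, ?_, fun _ _ => rfl, fun _ _ => rfl⟩, ?_⟩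
  · intro e he v hv
    simp only [Finset.mem_image] at he
    obtain ⟨e₀, he₀, rfl⟩ := he
    obtain ⟨a, ha, rfl⟩ := Sym2.mem_map.mp hv
    exact Finset.mem_image_of_mem φ (x.edges_sub _ he₀ a ha)
  · intro e he hd
    simp only [Finset.mem_image] at he
    obtain ⟨e₀, he₀, rfl⟩ := he
    obtain ⟨a, b, rfl⟩ := sym2_rep e₀
    have ha : a ∈ x.verts := x.edges_sub _ he₀ a (by simp)
    have hb : b ∈ x.verts := x.edges_sub _ he₀ b (by simp)
    rw [Sym2.map_pair_eq, Sym2.mk_isDiag_iff] at hd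
    exact x.edges_nodiag _ he₀ (Sym2.mk_isDiag_iff.mpr
      (hbij.injOn (Finset.mem_coe.mpr (hmx a ha)) (Finset.mem_coe.mpr (hmx b hb)) hd))
  · -- verts image ⊆ z.verts
    intro v hv
    simp only [Finset.mem_image] at hv
    obtain ⟨a, ha, rfl⟩ := hv
    exact hm a (hmx a ha)
  · -- edges image ⊆ z.edges
    intro e he
    simp only [Finset.mem_image] at he
    obtain ⟨e₀, he₀, rfl⟩ := he
    obtain ⟨a, b, rfl⟩ := sym2_rep e₀
    have ha : a ∈ y.verts := hmx a (x.edges_sub _ he₀ a (by simp))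
    have hb : b ∈ y.verts := hmx b (x.edges_sub _ he₀ b (by simp))
    rw [Sym2.map_pair_eq]
    exact (hedge a ha b hb).mp (hxy.2.1 he₀)
  · -- Iso from image graph to x : build Iso x (image) then symm
    refine iso_symm ⟨φ, ?_, ?_, ?_, ?_⟩
    · constructor
      · intro v hv
        exact Finset.mem_coe.mpr (Finset.mem_image_of_mem φ (Finset.mem_coe.mp hv))
      refine ⟨fun a ha b hb hab =>
        hbij.injOn (Finset.mem_coe.mpr (hmx a (Finset.mem_coe.mp ha)))
          (Finset.mem_coe.mpr (hmx b (Finset.mem_coe.mp hb))) hab, ?_⟩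
      intro v hv
      simp only [Finset.coe_image] at hv ⊢
      exact hv
    · intro u hu v hv
      constructor
      · intro hin
        simp only [Finset.mem_image]
        exact ⟨s(u, v), hin, by simp⟩
      · intro hin
        simp only [Finset.mem_image] at hin
        obtain ⟨e₀, he₀, heq⟩ := hin
        obtain ⟨a, b, rfl⟩ := sym2_rep e₀
        have ha : a ∈ x.verts := x.edges_sub _ he₀ a (by simp)
        have hb : b ∈ x.verts := x.edges_sub _ he₀ b (by simp)
        rw [Sym2.map_pair_eq, Sym2.eq_iff] at heq
        rcases heq with ⟨h1, h2⟩ | ⟨h1, h2⟩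
        · rwa [hbij.injOn (Finset.mem_coe.mpr (hmx a ha)) (Finset.mem_coe.mpr (hmx u hu)) h1,
            hbij.injOn (Finset.mem_coe.mpr (hmx b hb)) (Finset.mem_coe.mpr (hmx v hv)) h2] at he₀
        · rw [hbij.injOn (Finset.mem_coe.mpr (hmx a ha)) (Finset.mem_coe.mpr (hmx v hv)) h1,
            hbij.injOn (Finset.mem_coe.mpr (hmx b hb)) (Finset.mem_coe.mpr (hmx u hu)) h2] at he₀
          rwa [Sym2.eq_swap] at he₀
    · intro v hv
      exact (hlv v (hmx v hv)).trans (hxy.2.2.1 v hv).symm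
    · intro u hu v hv hev
      exact (hle u (hmx u hu) v (hmx v hv) (hxy.2.1 hev)).trans (hxy.2.2.2 _ hev).symm

theorem subIso_trans {g₁ g₂ g₃ : LGraph LV LE} (h : g₁.SubIso g₂)
    (h' : g₂.SubIso g₃) : g₁.SubIso g₃ := by
  obtain ⟨a, hab, hiso_a⟩ := h
  obtain ⟨b, hbc, hiso_b⟩ := h'
  obtain ⟨a', ha'b, hiso_a'⟩ := subIso_of_isSubgraph_of_iso hab (iso_symm hiso_b)
  exact ⟨a', isSubgraph_trans ha'b hbc, iso_trans hiso_a' hiso_a⟩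

/-- The empty graph with labels borrowed from `g₀`. -/
def emptyLike (g₀ : LGraph LV LE) : LGraph LV LE :=
  ⟨∅, ∅, by simp, by simp, g₀.ℓV, g₀.ℓE⟩

theorem emptyLike_subIso (g₀ g : LGraph LV LE) : (emptyLike g₀).SubIso g := by
  refine ⟨emptyLike g, ⟨by simp [emptyLike], by simp [emptyLike],
    fun v hv => by simp [emptyLike] at hv, fun e he => by simp [emptyLike] at he⟩,
    ⟨id, ?_, ?_, ?_, ?_⟩⟩
  · simp [emptyLike, Set.bijOn_empty]
  · intro u hu; simp [emptyLike] at hu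
  · intro v hv; simp [emptyLike] at hv
  · intro u hu; simp [emptyLike] at hu

theorem emptyLike_size (g₀ : LGraph LV LE) (αV : LV → ℝ) (αE : LE → ℝ) :
    (emptyLike g₀).sizeVE αV αE = 0 := by
  simp [emptyLike, LGraph.sizeVE]

end LGraph

namespace LGraph
variable {LV LE : Type}

/-- Intersection of two subgraphs of `h`, with `h`'s labels. -/
def interGraph (a b h : LGraph LV LE) : LGraph LV LE where
  verts := a.verts ∩ b.verts
  edges := a.edges ∩ b.edges
  edges_sub := fun e he v hv => Finset.mem_inter.mpr
    ⟨a.edges_sub e (Finset.mem_inter.mp he).1 v hv,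
     b.edges_sub e (Finset.mem_inter.mp he).2 v hv⟩
  edges_nodiag := fun e he => a.edges_nodiag e (Finset.mem_inter.mp he).1
  ℓV := h.ℓV
  ℓE := h.ℓE

theorem interGraph_isSubgraph_left {a b h : LGraph LV LE} (hah : a.IsSubgraph h) :
    (interGraph a b h).IsSubgraph a :=
  ⟨Finset.inter_subset_left, Finset.inter_subset_left,
    fun v hv => (hah.2.2.1 v (Finset.inter_subset_left hv)).symm,
    fun e he => (hah.2.2.2 e (Finset.inter_subset_left he)).symm⟩

theorem interGraph_isSubgraph_right {a b h : LGraph LV LE} (hbh : b.IsSubgraph h) :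
    (interGraph a b h).IsSubgraph b :=
  ⟨Finset.inter_subset_right, Finset.inter_subset_right,
    fun v hv => (hbh.2.2.1 v (Finset.inter_subset_right hv)).symm,
    fun e he => (hbh.2.2.2 e (Finset.inter_subset_right he)).symm⟩

end LGraph

/-- the Subgraph MCS Model `(G, ⊆, s_{GVEα})` is an MCS Model
(with isomorphic graphs identified, so equality in the order axioms and in
(S2) becomes isomorphism): `⊆` is a partial order, `s_{GVEα}` satisfies (S1)
and (S2), the common subelements of any two graphs form a nonempty set whose
set of sizes is finite and has a maximum (A1), and the diamond inequality (A2)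
holds. -/
theorem subgraph_mcs_model_is_mcs_model (LV LE : Type)
    (αV : LV → ℝ) (αE : LE → ℝ)
    (hαV : ∀ a, 0 < αV a) (hαE : ∀ b, 0 < αE b) :
    -- ⊆ is a partial order (antisymmetry up to isomorphism)
    (∀ g : LGraph LV LE, g.SubIso g) ∧
    (∀ g₁ g₂ g₃ : LGraph LV LE, g₁.SubIso g₂ → g₂.SubIso g₃ → g₁.SubIso g₃) ∧
    (∀ g₁ g₂ : LGraph LV LE, g₁.SubIso g₂ → g₂.SubIso g₁ → g₁.Iso g₂) ∧
    -- (S1)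
    (∀ g₁ g₂ : LGraph LV LE, g₁.SubIso g₂ →
      g₁.sizeVE αV αE ≤ g₂.sizeVE αV αE) ∧
    -- (S2) (up to isomorphism)
    (∀ g₁ g₂ : LGraph LV LE, g₁.SubIso g₂ →
      g₁.sizeVE αV αE = g₂.sizeVE αV αE → g₁.Iso g₂) ∧
    -- (A1): common subelements are nonempty and their sizes form a finite set
    -- with a maximum
    (∀ g₁ g₂ : LGraph LV LE, ∃ h : LGraph LV LE, h.SubIso g₁ ∧ h.SubIso g₂) ∧
    (∀ g₁ g₂ : LGraph LV LE,
      Set.Finite {t : ℝ | ∃ h : LGraph LV LE,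
        h.SubIso g₁ ∧ h.SubIso g₂ ∧ h.sizeVE αV αE = t}) ∧
    (∀ g₁ g₂ : LGraph LV LE, ∃ m : ℝ,
      IsGreatest {t : ℝ | ∃ h : LGraph LV LE,
        h.SubIso g₁ ∧ h.SubIso g₂ ∧ h.sizeVE αV αE = t} m) ∧
    -- (A2)
    (∀ g₁ g₂ h : LGraph LV LE, g₁.SubIso h → g₂.SubIso h →
      ∃ g₁₂ : LGraph LV LE, g₁₂.SubIso g₁ ∧ g₁₂.SubIso g₂ ∧
        g₁.sizeVE αV αE + g₂.sizeVE αV αE - g₁₂.sizeVE αV αE ≤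
          h.sizeVE αV αE) := by
  classical
  have S1 : ∀ g₁ g₂ : LGraph LV LE, g₁.SubIso g₂ →
      g₁.sizeVE αV αE ≤ g₂.sizeVE αV αE := by
    rintro g₁ g₂ ⟨g'', hsub, hiso⟩
    calc g₁.sizeVE αV αE = g''.sizeVE αV αE :=
          (LGraph.size_eq_of_iso αV αE hiso).symm
      _ ≤ g₂.sizeVE αV αE := LGraph.size_le_of_isSubgraph hαV hαE hsub
  have S2 : ∀ g₁ g₂ : LGraph LV LE, g₁.SubIso g₂ →
      g₁.sizeVE αV αE = g₂.sizeVE αV αE → g₁.Iso g₂ := by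
    rintro g₁ g₂ ⟨g'', hsub, hiso⟩ heq
    have h2 : g''.sizeVE αV αE = g₂.sizeVE αV αE :=
      (LGraph.size_eq_of_iso αV αE hiso).trans heq
    exact LGraph.iso_trans (LGraph.iso_symm hiso)
      (LGraph.iso_of_isSubgraph_size_eq hαV hαE hsub h2)
  have Afin : ∀ g₁ g₂ : LGraph LV LE,
      Set.Finite {t : ℝ | ∃ h : LGraph LV LE,
        h.SubIso g₁ ∧ h.SubIso g₂ ∧ h.sizeVE αV αE = t} := by
    intro g₁ g₂
    apply Set.Finite.subset (Set.Finite.image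
      (fun p : Finset ℕ × Finset (Sym2 ℕ) =>
        ∑ v ∈ p.1, αV (g₁.ℓV v) + ∑ e ∈ p.2, αE (g₁.ℓE e))
      (g₁.verts.powerset ×ˢ g₁.edges.powerset).finite_toSet)
    rintro t ⟨h, ⟨g'', hsub, hiso⟩, -, rfl⟩
    refine ⟨(g''.verts, g''.edges), ?_, ?_⟩
    · simp only [Finset.coe_product, Set.mem_prod, Finset.mem_coe,
        Finset.mem_powerset]
      exact ⟨hsub.1, hsub.2.1⟩
    · rw [← LGraph.size_eq_of_iso αV αE hiso, LGraph.size_sub_eq hsub]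
  have Ane : ∀ g₁ g₂ : LGraph LV LE,
      ∃ h : LGraph LV LE, h.SubIso g₁ ∧ h.SubIso g₂ := fun g₁ g₂ =>
    ⟨LGraph.emptyLike g₁, LGraph.emptyLike_subIso g₁ g₁,
      LGraph.emptyLike_subIso g₁ g₂⟩
  refine ⟨fun g => LGraph.subIso_of_isSubgraph (LGraph.isSubgraph_refl g),
    fun g₁ g₂ g₃ => LGraph.subIso_trans,
    fun g₁ g₂ h12 h21 => S2 g₁ g₂ h12 (le_antisymm (S1 _ _ h12) (S1 _ _ h21)),
    S1, S2, Ane, Afin, ?_, ?_⟩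
  · -- A1 max
    intro g₁ g₂
    obtain ⟨h0, h01, h02⟩ := Ane g₁ g₂
    obtain ⟨m, hmS, hmax⟩ := Set.Finite.exists_maximalFor id _ (Afin g₁ g₂)
      ⟨h0.sizeVE αV αE, h0, h01, h02, rfl⟩
    refine ⟨m, hmS, fun t ht => ?_⟩
    by_contra hlt
    push_neg at hlt
    exact absurd (hmax ht hlt.le) (not_le_of_gt hlt)
  · -- A2
    intro g₁ g₂ h h1 h2
    obtain ⟨a, hah, hiso_a⟩ := h1
    obtain ⟨b, hbh, hiso_b⟩ := h2
    set c := LGraph.interGraph a b h with hc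
    refine ⟨c, LGraph.subIso_of_isSubgraph_of_iso
        (LGraph.interGraph_isSubgraph_left hah) hiso_a,
      LGraph.subIso_of_isSubgraph_of_iso
        (LGraph.interGraph_isSubgraph_right hbh) hiso_b, ?_⟩
    have e1 : g₁.sizeVE αV αE =
        ∑ v ∈ a.verts, αV (h.ℓV v) + ∑ e ∈ a.edges, αE (h.ℓE e) := by
      rw [← LGraph.size_eq_of_iso αV αE hiso_a, LGraph.size_sub_eq hah]
    have e2 : g₂.sizeVE αV αE =
        ∑ v ∈ b.verts, αV (h.ℓV v) + ∑ e ∈ b.edges, αE (h.ℓE e) := by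
      rw [← LGraph.size_eq_of_iso αV αE hiso_b, LGraph.size_sub_eq hbh]
    have e3 : c.sizeVE αV αE =
        ∑ v ∈ a.verts ∩ b.verts, αV (h.ℓV v) +
          ∑ e ∈ a.edges ∩ b.edges, αE (h.ℓE e) := rfl
    have e4 : h.sizeVE αV αE =
        ∑ v ∈ h.verts, αV (h.ℓV v) + ∑ e ∈ h.edges, αE (h.ℓE e) := rfl
    have hv1 : ∑ v ∈ a.verts ∪ b.verts, αV (h.ℓV v) +
        ∑ v ∈ a.verts ∩ b.verts, αV (h.ℓV v) =
        ∑ v ∈ a.verts, αV (h.ℓV v) + ∑ v ∈ b.verts, αV (h.ℓV v) :=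
      Finset.sum_union_inter
    have hv2 : ∑ v ∈ a.verts ∪ b.verts, αV (h.ℓV v) ≤
        ∑ v ∈ h.verts, αV (h.ℓV v) :=
      Finset.sum_le_sum_of_subset_of_nonneg (Finset.union_subset hah.1 hbh.1)
        fun i _ _ => (hαV _).le
    have he1 : ∑ e ∈ a.edges ∪ b.edges, αE (h.ℓE e) +
        ∑ e ∈ a.edges ∩ b.edges, αE (h.ℓE e) =
        ∑ e ∈ a.edges, αE (h.ℓE e) + ∑ e ∈ b.edges, αE (h.ℓE e) :=
      Finset.sum_union_inter
    have he2 : ∑ e ∈ a.edges ∪ b.edges, αE (h.ℓE e) ≤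
        ∑ e ∈ h.edges, αE (h.ℓE e) :=
      Finset.sum_le_sum_of_subset_of_nonneg (Finset.union_subset hah.2.1 hbh.2.1)
        fun i _ _ => (hαE _).le
    rw [e1, e2, e3, e4]
    linarith
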